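/- With the parameterization of the previous statement (Y² = 4∏(Z+j_α), v_α = (Z²+2j_αZ+j_α(j_β+j_γ)−j_βj_γ)/Y, x as given), the product v₁v₂v₃ equals a rational function of Z and Y of the form p₆(Z)/Y³ for an explicit polynomial p₆ of degree 6 in Z; consequently, substituting into w² = g(x) + 2C₁v₁v₂v₃ and clearing denominators by G = wY², the curve 𝒟 is given by G² = p₇(Z) + 2C₁·Y·p₆(Z) for some polynomial p₇ in Z (with Y² = 4(Z+j₁)(Z+j₂)(Z+j₃)). -/

import Mathlib

open Polynomial

/-- With the elliptic parameterization of `v₁, v₂, v₃, x`, the product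
`v₁v₂v₃` equals `p₆(Z)/Y³` for a polynomial `p₆` of degree `6`, and after
setting `G = wY²`, the curve `𝒟 : w² = g(x) + 2C₁v₁v₂v₃` rewrites as
`G² = p₇(Z) + 2C₁·Y·p₆(Z)` for some polynomial `p₇`. -/
theorem stmt_5 (K₁ Hp Hs C₁ j₁ j₂ j₃ : ℂ)
    (h12 : j₁ ≠ j₂) (h13 : j₁ ≠ j₃) (h23 : j₂ ≠ j₃) :
    ∃ p₆ p₇ : Polynomial ℂ, p₆.natDegree = 6 ∧
      ∀ Z Y v₁ v₂ v₃ x : ℂ,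
        Y ^ 2 = 4 * (Z + j₁) * (Z + j₂) * (Z + j₃) → Y ≠ 0 →
        v₁ = (Z ^ 2 + 2 * j₁ * Z + j₁ * (j₂ + j₃) - j₂ * j₃) / Y →
        v₂ = (Z ^ 2 + 2 * j₂ * Z + j₂ * (j₃ + j₁) - j₃ * j₁) / Y →
        v₃ = (Z ^ 2 + 2 * j₃ * Z + j₃ * (j₁ + j₂) - j₁ * j₂) / Y →
        x = ((Z ^ 2 - j₁ * j₂ - j₂ * j₃ - j₃ * j₁) ^ 2 -
            4 * j₁ * j₂ * j₃ * (j₁ + j₂ + j₃)) / Y ^ 2 →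
        (v₁ * v₂ * v₃ = p₆.eval Z / Y ^ 3 ∧
          ∀ w : ℂ,
            w ^ 2 = (K₁ * x ^ 2 + Hp * x + Hs) + 2 * C₁ * (v₁ * v₂ * v₃) →
            (w * Y ^ 2) ^ 2 = p₇.eval Z + 2 * C₁ * Y * p₆.eval Z) := by
  set q₁ : Polynomial ℂ := X ^ 2 + C (2 * j₁) * X + C (j₁ * (j₂ + j₃) - j₂ * j₃) with hq₁
  set q₂ : Polynomial ℂ := X ^ 2 + C (2 * j₂) * X + C (j₂ * (j₃ + j₁) - j₃ * j₁) with hq₂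
  set q₃ : Polynomial ℂ := X ^ 2 + C (2 * j₃) * X + C (j₃ * (j₁ + j₂) - j₁ * j₂) with hq₃
  set N : Polynomial ℂ :=
    (X ^ 2 - C (j₁ * j₂ + j₂ * j₃ + j₃ * j₁)) ^ 2 -
      C (4 * j₁ * j₂ * j₃ * (j₁ + j₂ + j₃)) with hN
  set q : Polynomial ℂ := C 4 * (X + C j₁) * (X + C j₂) * (X + C j₃) with hq
  refine ⟨q₁ * q₂ * q₃, C K₁ * N ^ 2 + C Hp * N * q + C Hs * q ^ 2, ?_, ?_⟩
  · rw [hq₁, hq₂, hq₃]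
    compute_degree!
  · intro Z Y v₁ v₂ v₃ x hY hY0 hv₁ hv₂ hv₃ hx
    have hev : (q₁ * q₂ * q₃).eval Z =
        (Z ^ 2 + 2 * j₁ * Z + j₁ * (j₂ + j₃) - j₂ * j₃) *
        (Z ^ 2 + 2 * j₂ * Z + j₂ * (j₃ + j₁) - j₃ * j₁) *
        (Z ^ 2 + 2 * j₃ * Z + j₃ * (j₁ + j₂) - j₁ * j₂) := by
      simp [hq₁, hq₂, hq₃]; ring
    have hvv : v₁ * v₂ * v₃ = (q₁ * q₂ * q₃).eval Z / Y ^ 3 := by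
      rw [hev, hv₁, hv₂, hv₃]
      field_simp
    refine ⟨hvv, fun w hw => ?_⟩
    have hqev : q.eval Z = 4 * (Z + j₁) * (Z + j₂) * (Z + j₃) := by simp [hq]
    have hNev : N.eval Z = (Z ^ 2 - j₁ * j₂ - j₂ * j₃ - j₃ * j₁) ^ 2 -
        4 * j₁ * j₂ * j₃ * (j₁ + j₂ + j₃) := by simp [hN]; ring
    have hxY : x * Y ^ 2 = N.eval Z := by
      rw [hx, hNev]; field_simp
    have hYq : Y ^ 2 = q.eval Z := by rw [hqev, hY]
    have hvvY : (v₁ * v₂ * v₃) * Y ^ 4 = Y * (q₁ * q₂ * q₃).eval Z := by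
      rw [hvv]; field_simp
    have : (w * Y ^ 2) ^ 2 = w ^ 2 * Y ^ 4 := by ring
    rw [this, hw]
    have expand : (K₁ * x ^ 2 + Hp * x + Hs + 2 * C₁ * (v₁ * v₂ * v₃)) * Y ^ 4 =
        K₁ * (x * Y ^ 2) ^ 2 + Hp * (x * Y ^ 2) * Y ^ 2 + Hs * (Y ^ 2) ^ 2 +
          2 * C₁ * ((v₁ * v₂ * v₃) * Y ^ 4) := by ring
    rw [expand, hxY, hYq, hvvY]
    simp only [eval_add, eval_mul, eval_pow, eval_C]
    ring
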